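/- If A is a 2×2 complex matrix with trace 0 and exp(A) = [[−1, c],[0, −1]] with c ≠ 0, then a contradiction follows; i.e., no traceless 2×2 complex matrix has exponential equal to a non-diagonalizable matrix with both eigenvalues −1. -/

import Mathlib

open Matrix

attribute [local instance] Matrix.linftyOpNormedAddCommGroup Matrix.linftyOpNormedSpace
  Matrix.linftyOpNormedRing Matrix.linftyOpNormedAlgebra

lemma exp_of_sq_zero {𝔸 : Type*} [NormedRing 𝔸] [NormedAlgebra ℂ 𝔸] [CompleteSpace 𝔸]
    (x : 𝔸) (h : x ^ 2 = 0) : NormedSpace.exp x = 1 + x := by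
  rw [NormedSpace.exp_eq_tsum ℂ]
  show (∑' n : ℕ, ((n.factorial : ℂ))⁻¹ • x ^ n) = 1 + x
  rw [tsum_eq_sum (s := Finset.range 2) ?_]
  · simp [Finset.sum_range_succ]
  · intro n hn
    have h2 : 2 ≤ n := le_of_not_gt (by simpa using hn)
    have hx : x ^ n = 0 := by
      rw [← Nat.sub_add_cancel h2, pow_add, h, mul_zero]
    simp [hx]

theorem traceless_exp_ne_jordan (A : Matrix (Fin 2) (Fin 2) ℂ) (hA : A.trace = 0)
    (c : ℂ) (hc : c ≠ 0) :
    NormedSpace.exp A ≠ !![(-1 : ℂ), c; 0, -1] := by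
  intro hexp
  have hcomm : A * NormedSpace.exp A = NormedSpace.exp A * A :=
    ((Commute.refl A).exp_right)
  rw [hexp] at hcomm
  have h10 : A 1 0 = 0 := by
    have h := congrFun (congrFun hcomm 1) 1
    simp [Matrix.mul_apply, Fin.sum_univ_two] at h
    exact h.resolve_right hc
  have had : A 0 0 = A 1 1 := by
    have h := congrFun (congrFun hcomm 0) 1
    simp [Matrix.mul_apply, Fin.sum_univ_two] at h
    have hc' : c * A 0 0 = c * A 1 1 := by linear_combination h
    exact mul_left_cancel₀ hc hc'
  have htr : A 0 0 + A 1 1 = 0 := by rwa [Matrix.trace_fin_two] at hA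
  have h00 : A 0 0 = 0 := by linear_combination (htr + had) / 2
  have h11 : A 1 1 = 0 := by rw [← had]; exact h00
  have hsq : A ^ 2 = 0 := by
    ext i j
    fin_cases i <;> fin_cases j <;>
      simp [pow_two, Matrix.mul_apply, Fin.sum_univ_two, h10, h00, h11]
  have hexp' : NormedSpace.exp A = 1 + A := exp_of_sq_zero A hsq
  rw [hexp'] at hexp
  have h := congrFun (congrFun hexp 0) 0
  simp [h00] at h
  exact absurd h (by norm_num)
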